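/- Given distinct primes a and A with a ≡ 1 (mod 4) and A ≡ 1 (mod 4), there exists a prime b with b ≡ 3 (mod 4), (b/a) = 1 and (A/b) = -1. -/

import Mathlib

/-- Legendre's first auxiliary lemma: given distinct primes `a ≡ A ≡ 1 (mod 4)`, there is a
prime `b ≡ 3 (mod 4)` with `(b/a) = 1` and `(A/b) = -1`. -/
theorem legendre_lemma_one (a A : ℕ) [Fact a.Prime] [Fact A.Prime] (hne : a ≠ A)
    (ha : a % 4 = 1) (hA : A % 4 = 1) :
    ∃ b : ℕ, ∃ hb : b.Prime, b % 4 = 3 ∧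
      legendreSym a (b : ℤ) = 1 ∧ @legendreSym b ⟨hb⟩ (A : ℤ) = -1 := by
  have hap : a.Prime := Fact.out
  have hAp : A.Prime := Fact.out
  have ha2 : a ≠ 2 := by intro h; rw [h] at ha; norm_num at ha
  have hA2 : A ≠ 2 := by intro h; rw [h] at hA; norm_num at hA
  -- a nonsquare mod A
  have hchar : ringChar (ZMod A) ≠ 2 := by
    rw [ZMod.ringChar_zmod_n]; exact hA2
  obtain ⟨u, hu⟩ := FiniteField.exists_nonsquare hchar
  have hu0 : u ≠ 0 := fun h => hu (h ▸ IsSquare.zero)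
  -- coprimality facts
  have hcopaA : Nat.Coprime a A := (Nat.coprime_primes hap hAp).mpr hne
  have haodd : ¬ 2 ∣ a := by
    intro h; exact ha2 ((Nat.prime_dvd_prime_iff_eq Nat.prime_two hap).mp h).symm
  have hAodd : ¬ 2 ∣ A := by
    intro h; exact hA2 ((Nat.prime_dvd_prime_iff_eq Nat.prime_two hAp).mp h).symm
  have hcop4 : Nat.Coprime 4 (a * A) := by
    have : Nat.Coprime 2 (a * A) :=
      (Nat.coprime_mul_iff_right).mpr ⟨(Nat.coprime_primes Nat.prime_two hap).mpr
        (fun h => ha2 h.symm), (Nat.coprime_primes Nat.prime_two hAp).mpr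
        (fun h => hA2 h.symm)⟩
    have h4 : (4 : ℕ) = 2 * 2 := by norm_num
    rw [h4]; exact Nat.Coprime.mul this this
  have haA0 : a * A ≠ 0 := Nat.mul_ne_zero hap.pos.ne' hAp.pos.ne'
  haveI : NeZero (a * A) := ⟨haA0⟩
  haveI : NeZero (4 * (a * A)) := ⟨by positivity⟩
  -- CRT
  let f : ZMod (a * A) ≃+* ZMod a × ZMod A := ZMod.chineseRemainder hcopaA
  let e : ZMod (4 * (a * A)) ≃+* ZMod 4 × ZMod (a * A) := ZMod.chineseRemainder hcop4
  set c : ZMod (4 * (a * A)) := e.symm (3, f.symm (1, u)) with hc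
  have hcunit : IsUnit c := by
    rw [hc]
    apply IsUnit.map e.symm.toRingHom
    have h3 : IsUnit (3 : ZMod 4) := by decide
    have hr : IsUnit (f.symm (1, u)) := by
      apply IsUnit.map f.symm.toRingHom
      have h1 : IsUnit (1 : ZMod a) := isUnit_one
      have h2 : IsUnit u := isUnit_iff_ne_zero.mpr hu0
      obtain ⟨x1, hx1⟩ := isUnit_iff_exists_inv.mp h1
      obtain ⟨x2, hx2⟩ := isUnit_iff_exists_inv.mp h2
      exact isUnit_iff_exists_inv.mpr ⟨(x1, x2), by
        rw [Prod.mk_mul_mk, hx1, hx2]; rfl⟩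
    obtain ⟨x3, hx3⟩ := isUnit_iff_exists_inv.mp h3
    obtain ⟨xr, hxr⟩ := isUnit_iff_exists_inv.mp hr
    exact isUnit_iff_exists_inv.mpr ⟨(x3, xr), by
      rw [Prod.mk_mul_mk, hx3, hxr]; rfl⟩
  obtain ⟨b, hb2, hbp, hbc⟩ := Nat.forall_exists_prime_gt_and_eq_mod hcunit 2
  haveI : Fact b.Prime := ⟨hbp⟩
  have hbne2 : b ≠ 2 := by omega
  -- unpack the congruences
  have he : e ((b : ℕ) : ZMod (4 * (a * A))) = (3, f.symm (1, u)) := by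
    rw [hbc, hc, RingEquiv.apply_symm_apply]
  rw [map_natCast] at he
  have hb4 : ((b : ℕ) : ZMod 4) = 3 := congrArg Prod.fst he
  have hbaA : ((b : ℕ) : ZMod (a * A)) = f.symm (1, u) := congrArg Prod.snd he
  have hf : f ((b : ℕ) : ZMod (a * A)) = (1, u) := by
    rw [hbaA, RingEquiv.apply_symm_apply]
  rw [map_natCast] at hf
  have hba : ((b : ℕ) : ZMod a) = 1 := congrArg Prod.fst hf
  have hbA : ((b : ℕ) : ZMod A) = u := congrArg Prod.snd hf
  -- b % 4 = 3
  have hmod : b % 4 = 3 := by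
    have := congrArg ZMod.val hb4
    rwa [ZMod.val_natCast] at this
  refine ⟨b, hbp, hmod, ?_, ?_⟩
  · -- (b/a) = 1
    have hcast : ((b : ℤ) : ZMod a) = ((b : ℕ) : ZMod a) := by push_cast; rfl
    rw [legendreSym.eq_one_iff a (by rw [hcast, hba]; exact one_ne_zero)]
    rw [hcast, hba]; exact IsSquare.one
  · -- (A/b) = -1
    rw [legendreSym.quadratic_reciprocity_one_mod_four hA hbne2]
    rw [legendreSym.eq_neg_one_iff]
    have hcast : ((b : ℤ) : ZMod A) = ((b : ℕ) : ZMod A) := by push_cast; rfl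
    rw [hcast, hbA]; exact hu
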